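/- Let x ∈ ℝ³, r > 0, 0 < ε < 10⁻⁵·r, and let b ≥ 10⁶ and a > b be such that ε^b·ε^(b/20) ≥ 2·r·ε^a + ε^(2b) (which holds for a sufficiently large relative to b). Let y ∈ ∂B(x, r) be a point with y₃ ≤ x₃ and dist(y, ℓ) ≥ ε^(b/20), where ℓ = {z ∈ ∂B(x, r) : z₃ = x₃}. Then y + (0, 0, ε^b) ∈ B(x, r − ε^a). -/

import Mathlib

set_option maxHeartbeats 4000000

def equator (x : EuclideanSpace ℝ (Fin 3)) (r : ℝ) : Set (EuclideanSpace ℝ (Fin 3)) :=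
  {y | y ∈ Metric.sphere x r ∧ y 2 = x 2}

lemma dist_sq_three (x y : EuclideanSpace ℝ (Fin 3)) :
    dist y x ^ 2 = (y 0 - x 0)^2 + (y 1 - x 1)^2 + (y 2 - x 2)^2 := by
  rw [EuclideanSpace.dist_eq]
  rw [Real.sq_sqrt (Finset.sum_nonneg fun i _ => sq_nonneg _)]
  simp [Fin.sum_univ_three, Real.dist_eq, sq_abs]

lemma dist_le_of_sq_le {u v : EuclideanSpace ℝ (Fin 3)} {t : ℝ} (ht : 0 ≤ t)
    (h : dist u v ^ 2 ≤ t ^ 2) : dist u v ≤ t := by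
  nlinarith [dist_nonneg (x := u) (y := v)]

lemma dist_eq_of_sq_eq {u v : EuclideanSpace ℝ (Fin 3)} {t : ℝ} (ht : 0 ≤ t)
    (h : dist u v ^ 2 = t ^ 2) : dist u v = t := by
  nlinarith [dist_nonneg (x := u) (y := v)]

lemma mk_point (a0 a1 a2 : ℝ) :
    ∃ z : EuclideanSpace ℝ (Fin 3), z 0 = a0 ∧ z 1 = a1 ∧ z 2 = a2 := by
  refine ⟨(WithLp.equiv 2 (Fin 3 → ℝ)).symm ![a0, a1, a2], ?_, ?_, ?_⟩ <;>
    simp [WithLp.equiv_symm_apply, PiLp.toLp_apply]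

theorem southern_point_shift
    (x y : EuclideanSpace ℝ (Fin 3)) (r ε a b : ℝ)
    (hb : (10 : ℝ) ^ 6 ≤ b) (hab : b < a)
    (hε : 0 < ε) (hεr : ε < r / 10 ^ 5)
    (hcond : 2 * r * ε ^ a + ε ^ (2 * b) ≤ ε ^ b * ε ^ (b / 20))
    (hy : y ∈ Metric.sphere x r)
    (hsouth : y 2 ≤ x 2)
    (hfar : ε ^ (b / 20) ≤ Metric.infDist y (equator x r)) :
    y + EuclideanSpace.single 2 (ε ^ b) ∈ Metric.closedBall x (r - ε ^ a) := by
  have hr : 0 < r := by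
    have : (0:ℝ) < r / 10 ^ 5 := lt_trans hε hεr
    linarith
  have hεb : 0 < ε ^ b := Real.rpow_pos_of_pos hε b
  have hεb20 : 0 < ε ^ (b / 20) := Real.rpow_pos_of_pos hε _
  have hεa : 0 < ε ^ a := Real.rpow_pos_of_pos hε a
  have hb0 : (0:ℝ) < b := by norm_num at hb ⊢; linarith
  have hε1 : ε < 1 := by
    by_contra h
    push_neg at h
    have h1 : ε ^ (b + b / 20) ≤ ε ^ (2 * b) :=
      Real.rpow_le_rpow_of_exponent_le h (by linarith)
    rw [Real.rpow_add hε] at h1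
    nlinarith
  have hεa_le : ε ^ a ≤ ε := by
    calc ε ^ a ≤ ε ^ (1:ℝ) := Real.rpow_le_rpow_of_exponent_ge hε hε1.le (by nlinarith)
    _ = ε := Real.rpow_one ε
  have hra : 0 ≤ r - ε ^ a := by nlinarith
  set δ : ℝ := x 2 - y 2 with hδdef
  have hδ0 : 0 ≤ δ := by simp only [hδdef]; linarith
  have hyr : dist y x = r := Metric.mem_sphere.mp hy
  have hsum : (y 0 - x 0)^2 + (y 1 - x 1)^2 + δ^2 = r^2 := by
    have h := dist_sq_three x y
    rw [hyr] at h
    simp only [hδdef]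
    linear_combination -h
  have hδr : δ ≤ r := by nlinarith [sq_nonneg (y 0 - x 0), sq_nonneg (y 1 - x 1)]
  -- key geometric claim
  have hkey : ε ^ (b / 20) ≤ 2 * δ := by
    have main : ∃ z ∈ equator x r, dist y z ^ 2 ≤ 2 * δ ^ 2 := by
      set s : ℝ := (y 0 - x 0)^2 + (y 1 - x 1)^2 with hsdef
      have hs0 : 0 ≤ s := add_nonneg (sq_nonneg _) (sq_nonneg _)
      rcases eq_or_lt_of_le hs0 with hs | hs
      · -- south pole case
        have h0 : y 0 - x 0 = 0 := by
          have : (y 0 - x 0)^2 = 0 := by nlinarith [sq_nonneg (y 1 - x 1)]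
          exact pow_eq_zero_iff (n := 2) (by norm_num) |>.mp this
        have h1 : y 1 - x 1 = 0 := by
          have : (y 1 - x 1)^2 = 0 := by nlinarith [sq_nonneg (y 0 - x 0)]
          exact pow_eq_zero_iff (n := 2) (by norm_num) |>.mp this
        have hδeq : δ = r := by
          have hmul : (δ - r) * (δ + r) = 0 := by nlinarith
          rcases mul_eq_zero.mp hmul with h | h
          · linarith
          · linarith
        obtain ⟨z, hz0, hz1, hz2⟩ := mk_point (x 0 + r) (x 1) (x 2)
        refine ⟨z, ⟨?_, hz2⟩, ?_⟩
        · rw [Metric.mem_sphere]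
          apply dist_eq_of_sq_eq hr.le
          rw [dist_sq_three, hz0, hz1, hz2]
          ring
        · rw [dist_sq_three, hz0, hz1, hz2]
          simp only [← hδdef]
          nlinarith
      · -- general case
        set ρ : ℝ := Real.sqrt s with hρdef
        have hρ0 : 0 < ρ := Real.sqrt_pos.mpr hs
        have hρ2 : ρ ^ 2 = s := Real.sq_sqrt hs.le
        set c : ℝ := r / ρ with hcdef
        have hcρ : c * ρ = r := div_mul_cancel₀ r hρ0.ne'
        have hρr : ρ ≤ r := by nlinarith [sq_nonneg δ]
        have hrρδ : r - ρ ≤ δ := by nlinarith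
        obtain ⟨z, hz0, hz1, hz2⟩ :=
          mk_point (x 0 + c * (y 0 - x 0)) (x 1 + c * (y 1 - x 1)) (x 2)
        refine ⟨z, ⟨?_, hz2⟩, ?_⟩
        · rw [Metric.mem_sphere]
          apply dist_eq_of_sq_eq hr.le
          rw [dist_sq_three, hz0, hz1, hz2]
          have : (x 0 + c * (y 0 - x 0) - x 0)^2 + (x 1 + c * (y 1 - x 1) - x 1)^2
              + (x 2 - x 2)^2 = c^2 * s := by rw [hsdef]; ring
          rw [this, ← hρ2]
          linear_combination (c * ρ + r) * hcρ
        · rw [dist_sq_three, hz0, hz1, hz2]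
          have he : (y 0 - (x 0 + c * (y 0 - x 0)))^2 + (y 1 - (x 1 + c * (y 1 - x 1)))^2
              + (y 2 - x 2)^2 = (1 - c)^2 * s + δ^2 := by
            rw [hsdef]; simp only [hδdef]; ring
          rw [he]
          have he2 : (1 - c)^2 * s = (r - ρ)^2 := by
            rw [← hρ2]; linear_combination (c * ρ + r - 2 * ρ) * hcρ
          rw [he2]
          nlinarith
    obtain ⟨z, hz, hdz⟩ := main
    have h1 : Metric.infDist y (equator x r) ≤ dist y z := Metric.infDist_le_dist_of_mem hz
    have h2 : dist y z ≤ 2 * δ := by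
      nlinarith [dist_nonneg (x := y) (y := z)]
    linarith
  -- final computation
  have h2b : ε ^ (2 * b) = (ε ^ b) ^ 2 := by
    rw [mul_comm, Real.rpow_mul hε.le, Real.rpow_two]
  rw [Metric.mem_closedBall]
  apply dist_le_of_sq_le hra
  rw [dist_sq_three]
  have hc0 : ((y + EuclideanSpace.single 2 (ε ^ b) : EuclideanSpace ℝ (Fin 3)) 0) = y 0 := by
    simp [EuclideanSpace.single_apply]
  have hc1 : ((y + EuclideanSpace.single 2 (ε ^ b) : EuclideanSpace ℝ (Fin 3)) 1) = y 1 := by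
    simp [EuclideanSpace.single_apply]
  have hc2 : ((y + EuclideanSpace.single 2 (ε ^ b) : EuclideanSpace ℝ (Fin 3)) 2) = y 2 + ε ^ b := by
    simp [EuclideanSpace.single_apply]
  rw [hc0, hc1, hc2]
  have he : (y 0 - x 0)^2 + (y 1 - x 1)^2 + (y 2 + ε ^ b - x 2)^2
      = r^2 + (ε ^ b)^2 - 2 * (ε ^ b) * δ := by
    simp only [hδdef] at hsum ⊢
    linear_combination hsum
  rw [he]
  have hmul : ε ^ b * ε ^ (b / 20) ≤ 2 * (ε ^ b) * δ := by
    have := mul_le_mul_of_nonneg_left hkey hεb.le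
    linarith
  nlinarith [sq_nonneg (ε ^ a)]
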